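/- Let n ≤ m be positive integers, let π be a uniformly random permutation of [n+m], and fix distinct l₁,…,l_n ∈ [m]. For i ∈ [n] define d_i = 1{π(i) ∈ [n] and π(n+l_i) ∈ [n+m]∖[n]} − 1{π(i) ∈ [n+m]∖[n] and π(n+l_i) ∈ [n]}. Then E[Σ_{i=1}^n d_i] = 0 and the sum is SG(2n); in particular E[exp(θ Σ_{i=1}^n d_i)] ≤ exp(nθ²) for all θ ∈ ℝ. -/

import Mathlib

noncomputable section

namespace Stmt8Aux

variable {n m : ℕ}

/-- Sign-flip map on the sum type: swaps `inl i` with `inr (l i)` when `ε i = true`. -/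
def sigmaFun (l : Fin n ↪ Fin m) (ε : Fin n → Bool) : Fin n ⊕ Fin m → Fin n ⊕ Fin m
  | .inl i => if ε i then .inr (l i) else .inl i
  | .inr j =>
    match Function.partialInv l j with
    | some i => if ε i then .inl i else .inr j
    | none => .inr j

lemma sigmaFun_involutive (l : Fin n ↪ Fin m) (ε : Fin n → Bool) :
    Function.Involutive (sigmaFun l ε) := by
  intro x
  rcases x with i | j
  · by_cases h : ε i
    · simp only [sigmaFun, h, if_true]
      rw [show Function.partialInv (⇑l) (l i) = some i from
        Function.partialInv_left l.injective i]
      simp [h]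
    · simp [sigmaFun, h]
  · rcases hp : Function.partialInv (⇑l) j with _ | i
    · simp [sigmaFun, hp]
    · have hli : l i = j := (Function.partialInv_of_injective l.injective i j).mp hp
      by_cases h : ε i
      · simp [sigmaFun, hp, h, hli]
      · simp [sigmaFun, hp, h]

def sigmaPerm (l : Fin n ↪ Fin m) (ε : Fin n → Bool) : Equiv.Perm (Fin (n + m)) :=
  (finSumFinEquiv : Fin n ⊕ Fin m ≃ Fin (n + m)).permCongr
    ((sigmaFun_involutive l ε).toPerm)

lemma sigmaPerm_castAdd (l : Fin n ↪ Fin m) (ε : Fin n → Bool) (i : Fin n) :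
    sigmaPerm l ε (Fin.castAdd m i) =
      if ε i then Fin.natAdd n (l i) else Fin.castAdd m i := by
  have h1 : (finSumFinEquiv : Fin n ⊕ Fin m ≃ Fin (n + m)).symm (Fin.castAdd m i) =
      Sum.inl i := by
    rw [Equiv.symm_apply_eq, finSumFinEquiv_apply_left]
  simp only [sigmaPerm, Equiv.permCongr_apply, h1, Function.Involutive.coe_toPerm, sigmaFun]
  by_cases h : ε i <;> simp [h]

lemma sigmaPerm_natAdd (l : Fin n ↪ Fin m) (ε : Fin n → Bool) (i : Fin n) :
    sigmaPerm l ε (Fin.natAdd n (l i)) =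
      if ε i then Fin.castAdd m i else Fin.natAdd n (l i) := by
  have h1 : (finSumFinEquiv : Fin n ⊕ Fin m ≃ Fin (n + m)).symm (Fin.natAdd n (l i)) =
      Sum.inr (l i) := by
    rw [Equiv.symm_apply_eq, finSumFinEquiv_apply_right]
  simp only [sigmaPerm, Equiv.permCongr_apply, h1, Function.Involutive.coe_toPerm, sigmaFun]
  rw [show Function.partialInv (⇑l) (l i) = some i from
    Function.partialInv_left l.injective i]
  by_cases h : ε i <;> simp [h]

end Stmt8Aux

/-- The quantity `d_i` of the lemma: for a permutation `π` of `[n+m]` and `l_i ∈ [m]`,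
`d_i = 1{π(i) ∈ [n], π(n+l_i) ∉ [n]} − 1{π(i) ∉ [n], π(n+l_i) ∈ [n]}`. -/
def dTerm (n m : ℕ) (l : Fin n ↪ Fin m) (π : Equiv.Perm (Fin (n + m))) (i : Fin n) : ℝ :=
  (if ((π (Fin.castAdd m i) : ℕ) < n) ∧ ¬((π (Fin.natAdd n (l i)) : ℕ) < n) then (1 : ℝ) else 0)
    - (if ¬((π (Fin.castAdd m i) : ℕ) < n) ∧ ((π (Fin.natAdd n (l i)) : ℕ) < n) then (1 : ℝ) else 0)

namespace Stmt8Aux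

lemma dTerm_mul (l : Fin n ↪ Fin m) (ε : Fin n → Bool) (π : Equiv.Perm (Fin (n + m)))
    (i : Fin n) :
    dTerm n m l (π * sigmaPerm l ε) i =
      (if ε i then (-1 : ℝ) else 1) * dTerm n m l π i := by
  simp only [dTerm, Equiv.Perm.mul_apply, sigmaPerm_castAdd, sigmaPerm_natAdd]
  by_cases h : ε i <;>
    by_cases h1 : ((π (Fin.castAdd m i) : ℕ) < n) <;>
      by_cases h2 : ((π (Fin.natAdd n (l i)) : ℕ) < n) <;>
        simp [h, h1, h2]

lemma dTerm_sq_le (l : Fin n ↪ Fin m) (π : Equiv.Perm (Fin (n + m))) (i : Fin n) :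
    (dTerm n m l π i) ^ 2 ≤ 1 := by
  unfold dTerm
  by_cases h1 : ((π (Fin.castAdd m i) : ℕ) < n) <;>
    by_cases h2 : ((π (Fin.natAdd n (l i)) : ℕ) < n) <;>
      simp [h1, h2]

end Stmt8Aux

/-- for a uniformly random permutation `π` of `[n+m]` and fixed distinct
`l₁,…,l_n ∈ [m]`, the sum `Σᵢ dᵢ` has mean zero and is SG(2n):
`E[exp(θ Σᵢ dᵢ)] ≤ exp(nθ²)` for all `θ`. -/
theorem stmt_8 (n m : ℕ) (hn : 0 < n) (hm : 0 < m) (hnm : n ≤ m) (l : Fin n ↪ Fin m) :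
    ((Fintype.card (Equiv.Perm (Fin (n + m))) : ℝ))⁻¹ *
        (∑ π : Equiv.Perm (Fin (n + m)), ∑ i : Fin n, dTerm n m l π i) = 0 ∧
      ∀ θ : ℝ,
        ((Fintype.card (Equiv.Perm (Fin (n + m))) : ℝ))⁻¹ *
            ∑ π : Equiv.Perm (Fin (n + m)), Real.exp (θ * ∑ i : Fin n, dTerm n m l π i) ≤
          Real.exp (n * θ ^ 2) := by
  classical
  -- reindexing lemma
  have reindex : ∀ (ε : Fin n → Bool) (F : Equiv.Perm (Fin (n + m)) → ℝ),
      ∑ π : Equiv.Perm (Fin (n + m)), F (π * Stmt8Aux.sigmaPerm l ε) =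
        ∑ π : Equiv.Perm (Fin (n + m)), F π := by
    intro ε F
    exact Equiv.sum_comp (Equiv.mulRight (Stmt8Aux.sigmaPerm l ε)) F
  constructor
  · -- mean zero
    have h1 : (∑ π : Equiv.Perm (Fin (n + m)), ∑ i : Fin n, dTerm n m l π i) =
        - ∑ π : Equiv.Perm (Fin (n + m)), ∑ i : Fin n, dTerm n m l π i := by
      conv_lhs => rw [← reindex (fun _ => true) (fun π => ∑ i : Fin n, dTerm n m l π i)]
      rw [← Finset.sum_neg_distrib]
      refine Finset.sum_congr rfl fun π _ => ?_
      rw [← Finset.sum_neg_distrib]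
      refine Finset.sum_congr rfl fun i _ => ?_
      rw [Stmt8Aux.dTerm_mul]
      simp
    have h2 : (∑ π : Equiv.Perm (Fin (n + m)), ∑ i : Fin n, dTerm n m l π i) = 0 := by
      linarith
    rw [h2, mul_zero]
  · intro θ
    set N := (Fintype.card (Equiv.Perm (Fin (n + m))) : ℝ) with hN
    set A := ∑ π : Equiv.Perm (Fin (n + m)), Real.exp (θ * ∑ i : Fin n, dTerm n m l π i)
      with hA
    have sg : ∀ ε : Fin n → Bool,
        (∑ π : Equiv.Perm (Fin (n + m)),
          Real.exp (θ * ∑ i : Fin n,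
            (if ε i then (-1 : ℝ) else 1) * dTerm n m l π i)) = A := by
      intro ε
      rw [hA, ← reindex ε (fun π => Real.exp (θ * ∑ i : Fin n, dTerm n m l π i))]
      refine Finset.sum_congr rfl fun π _ => ?_
      congr 1
      congr 1
      exact Finset.sum_congr rfl fun i _ => (Stmt8Aux.dTerm_mul l ε π i).symm
    have card2 : (Fintype.card (Fin n → Bool) : ℝ) = 2 ^ n := by
      simp [Fintype.card_fun]
    -- average over ε
    have hAavg : A = ((2 : ℝ) ^ n)⁻¹ *
        ∑ ε : Fin n → Bool, ∑ π : Equiv.Perm (Fin (n + m)),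
          Real.exp (θ * ∑ i : Fin n,
            (if ε i then (-1 : ℝ) else 1) * dTerm n m l π i) := by
      rw [Finset.sum_congr rfl fun ε _ => sg ε]
      rw [Finset.sum_const, Finset.card_univ, nsmul_eq_mul, ← card2]
      rw [← mul_assoc, inv_mul_cancel₀ (by rw [card2]; positivity), one_mul]
    -- pointwise bound on the inner double sum
    have key : ∀ π : Equiv.Perm (Fin (n + m)),
        (∑ ε : Fin n → Bool,
          Real.exp (θ * ∑ i : Fin n,
            (if ε i then (-1 : ℝ) else 1) * dTerm n m l π i)) ≤
        (2 : ℝ) ^ n * Real.exp (n * (θ ^ 2 / 2)) := by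
      intro π
      have expand : (∑ ε : Fin n → Bool,
          Real.exp (θ * ∑ i : Fin n,
            (if ε i then (-1 : ℝ) else 1) * dTerm n m l π i)) =
          ∏ i : Fin n, ∑ b : Bool,
            Real.exp (θ * ((if b then (-1 : ℝ) else 1) * dTerm n m l π i)) := by
        rw [Finset.prod_univ_sum (fun _ : Fin n => (Finset.univ : Finset Bool))
            (fun i b => Real.exp (θ * ((if b then (-1 : ℝ) else 1) * dTerm n m l π i)))]
        rw [Fintype.piFinset_univ]
        refine Finset.sum_congr rfl fun ε _ => ?_
        rw [Finset.mul_sum, Real.exp_sum]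
      have bound : ∀ i : Fin n,
          (∑ b : Bool,
            Real.exp (θ * ((if b then (-1 : ℝ) else 1) * dTerm n m l π i))) ≤
          2 * Real.exp (θ ^ 2 / 2) := by
        intro i
        set d := dTerm n m l π i with hd
        have hsum : (∑ b : Bool,
            Real.exp (θ * ((if b then (-1 : ℝ) else 1) * d))) =
            2 * Real.cosh (θ * d) := by
          rw [Fintype.sum_bool]
          simp only [if_true, Bool.false_eq_true, if_false, Real.cosh_eq, one_mul,
            neg_one_mul, mul_neg, Real.exp_neg]
          ring
        rw [hsum]
        have h1 : Real.cosh (θ * d) ≤ Real.exp ((θ * d) ^ 2 / 2) :=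
          Real.cosh_le_exp_half_sq (θ * d)
        have h2 : (θ * d) ^ 2 / 2 ≤ θ ^ 2 / 2 := by
          have := Stmt8Aux.dTerm_sq_le l π i
          rw [← hd] at this
          nlinarith [sq_nonneg θ]
        have h3 : Real.exp ((θ * d) ^ 2 / 2) ≤ Real.exp (θ ^ 2 / 2) :=
          Real.exp_le_exp.mpr h2
        linarith [Real.cosh_le_exp_half_sq (θ * d) |>.trans h3]
      calc (∑ ε : Fin n → Bool,
          Real.exp (θ * ∑ i : Fin n,
            (if ε i then (-1 : ℝ) else 1) * dTerm n m l π i))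
          = ∏ i : Fin n, ∑ b : Bool,
            Real.exp (θ * ((if b then (-1 : ℝ) else 1) * dTerm n m l π i)) := expand
        _ ≤ ∏ i : Fin n, (2 * Real.exp (θ ^ 2 / 2)) := by
            refine Finset.prod_le_prod (fun i _ => ?_) (fun i _ => bound i)
            exact Finset.sum_nonneg fun b _ => (Real.exp_pos _).le
        _ = (2 : ℝ) ^ n * Real.exp (n * (θ ^ 2 / 2)) := by
            rw [Finset.prod_const, Finset.card_univ, Fintype.card_fin, mul_pow,
              ← Real.exp_nat_mul]
    -- combine
    have hNpos : (0 : ℝ) < N := by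
      rw [hN]
      exact_mod_cast Fintype.card_pos
    have hAle : A ≤ N * Real.exp (n * (θ ^ 2 / 2)) := by
      rw [hAavg, Finset.sum_comm]
      have : (∑ π : Equiv.Perm (Fin (n + m)), ∑ ε : Fin n → Bool,
          Real.exp (θ * ∑ i : Fin n,
            (if ε i then (-1 : ℝ) else 1) * dTerm n m l π i)) ≤
          ∑ _π : Equiv.Perm (Fin (n + m)), (2 : ℝ) ^ n * Real.exp (n * (θ ^ 2 / 2)) :=
        Finset.sum_le_sum fun π _ => key π
      calc ((2 : ℝ) ^ n)⁻¹ * ∑ π : Equiv.Perm (Fin (n + m)), ∑ ε : Fin n → Bool,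
            Real.exp (θ * ∑ i : Fin n,
              (if ε i then (-1 : ℝ) else 1) * dTerm n m l π i)
          ≤ ((2 : ℝ) ^ n)⁻¹ *
            ∑ _π : Equiv.Perm (Fin (n + m)), (2 : ℝ) ^ n * Real.exp (n * (θ ^ 2 / 2)) := by
            apply mul_le_mul_of_nonneg_left this (by positivity)
        _ = N * Real.exp (n * (θ ^ 2 / 2)) := by
            rw [Finset.sum_const, Finset.card_univ, nsmul_eq_mul, ← hN]
            field_simp
    have hfin : N⁻¹ * A ≤ Real.exp (n * (θ ^ 2 / 2)) := by
      calc N⁻¹ * A ≤ N⁻¹ * (N * Real.exp (n * (θ ^ 2 / 2))) :=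
            mul_le_mul_of_nonneg_left hAle (by positivity)
        _ = Real.exp (n * (θ ^ 2 / 2)) := by field_simp
    refine hfin.trans (Real.exp_le_exp.mpr ?_)
    have : (0 : ℝ) ≤ (n : ℝ) * θ ^ 2 := by positivity
    nlinarith
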